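/- Let f, g ∈ ℂ[z] be polynomials, not both zero, let m = max(deg f, deg g), and let n ≥ m. Then the dimension of the kernel of the 2n×2n resultant matrix R_{2n} = [[T_f, Z·H_f],[T_g, Z·H_g]] (built from the n×n Hankel, Toeplitz and reverse-identity matrices) equals n − m + deg gcd(f, g). -/

import Mathlib

open Polynomial Matrix

/-- The `n × n` Hankel matrix of a polynomial `f`: `(H_f)_{jk} = f_{j+k+1}`. -/
noncomputable def Hk (n : ℕ) (f : ℂ[X]) : Matrix (Fin n) (Fin n) ℂ :=
  Matrix.of fun j k => f.coeff ((j : ℕ) + (k : ℕ) + 1)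

/-- The `n × n` upper triangular Toeplitz matrix of a polynomial `f`:
`(T_f)_{jk} = f_{k-j}` if `k ≥ j`, and `0` otherwise. -/
noncomputable def Tp (n : ℕ) (f : ℂ[X]) : Matrix (Fin n) (Fin n) ℂ :=
  Matrix.of fun j k => if (j : ℕ) ≤ (k : ℕ) then f.coeff ((k : ℕ) - (j : ℕ)) else 0

/-- The `n × n` reverse identity matrix `Z`. -/
noncomputable def Rv (n : ℕ) : Matrix (Fin n) (Fin n) ℂ :=
  Matrix.of fun j k => if (j : ℕ) + (k : ℕ) = n - 1 then 1 else 0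

/-- The `n × n` Bezoutian matrix of `f` and `g`: `B = H_f T_g - H_g T_f`. -/
noncomputable def Bz (n : ℕ) (f g : ℂ[X]) : Matrix (Fin n) (Fin n) ℂ :=
  Hk n f * Tp n g - Hk n g * Tp n f

/-- The `2n × 2n` resultant matrix of `f` and `g`:
`R = [[T_f, Z H_f], [T_g, Z H_g]]`. -/
noncomputable def Rs (n : ℕ) (f g : ℂ[X]) : Matrix (Fin n ⊕ Fin n) (Fin n ⊕ Fin n) ℂ :=
  Matrix.fromBlocks (Tp n f) (Rv n * Hk n f) (Tp n g) (Rv n * Hk n g)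

namespace ResAux

/-- map from coefficient vectors to polynomials -/
noncomputable def Phi (n : ℕ) : (Fin n ⊕ Fin n → ℂ) →ₗ[ℂ] ℂ[X] where
  toFun v := (∑ k : Fin n, v (Sum.inl k) • (X : ℂ[X]) ^ (2*n-1-(k:ℕ)))
      + (∑ k : Fin n, v (Sum.inr k) • (X : ℂ[X]) ^ (n-1-(k:ℕ)))
  map_add' v w := by simp [add_smul, Finset.sum_add_distrib]; ring
  map_smul' c v := by simp [smul_smul, Finset.smul_sum, mul_add]

noncomputable def Psi (n : ℕ) : ℂ[X] →ₗ[ℂ] (Fin n ⊕ Fin n → ℂ) where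
  toFun P := Sum.elim (fun j => P.coeff (2*n-1-(j:ℕ))) (fun j => P.coeff (n-1-(j:ℕ)))
  map_add' p q := by funext s; cases s <;> simp
  map_smul' c p := by funext s; cases s <;> simp

lemma Phi_coeff (n : ℕ) (v : Fin n ⊕ Fin n → ℂ) (e : ℕ) :
    (Phi n v).coeff e =
      if h : n ≤ e ∧ e < 2*n then v (Sum.inl ⟨2*n-1-e, by omega⟩)
      else if h2 : e < n then v (Sum.inr ⟨n-1-e, by omega⟩) else 0 := by
  have hc : ∀ (w : Fin n → ℂ) (a : Fin n → ℕ),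
      (∑ k : Fin n, w k • (X : ℂ[X]) ^ (a k)).coeff e = ∑ k : Fin n, w k * (if a k = e then 1 else 0) := by
    intro w a
    rw [finset_sum_coeff]
    exact Finset.sum_congr rfl fun k _ => by rw [coeff_smul, coeff_X_pow]; simp [smul_eq_mul, eq_comm]
  simp only [Phi, LinearMap.coe_mk, AddHom.coe_mk, coeff_add, hc]
  by_cases h : n ≤ e ∧ e < 2*n
  · rw [dif_pos h]
    have h1 : (∑ k : Fin n, v (Sum.inl k) * (if 2*n-1-(k:ℕ) = e then 1 else 0))
        = v (Sum.inl ⟨2*n-1-e, by omega⟩) := by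
      rw [Finset.sum_eq_single (⟨2*n-1-e, by omega⟩ : Fin n)]
      · rw [if_pos (by simp; omega), mul_one]
      · intro b _ hb
        rw [if_neg (fun hh => hb (by ext; simp; omega)), mul_zero]
      · simp
    have h2 : (∑ k : Fin n, v (Sum.inr k) * (if n-1-(k:ℕ) = e then 1 else 0)) = 0 := by
      apply Finset.sum_eq_zero; intro k _
      rw [if_neg (by omega), mul_zero]
    rw [h1, h2, add_zero]
  · rw [dif_neg h]
    have h1 : (∑ k : Fin n, v (Sum.inl k) * (if 2*n-1-(k:ℕ) = e then 1 else 0)) = 0 := by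
      apply Finset.sum_eq_zero; intro k _
      rw [if_neg (by omega), mul_zero]
    rw [h1, zero_add]
    by_cases h2 : e < n
    · rw [dif_pos h2, Finset.sum_eq_single (⟨n-1-e, by omega⟩ : Fin n)]
      · rw [if_pos (by simp; omega), mul_one]
      · intro b _ hb
        rw [if_neg (fun hh => hb (by ext; simp; omega)), mul_zero]
      · simp
    · rw [dif_neg h2]
      apply Finset.sum_eq_zero; intro k _
      rw [if_neg (by omega), mul_zero]

lemma Psi_Phi (n : ℕ) (v : Fin n ⊕ Fin n → ℂ) : Psi n (Phi n v) = v := by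
  funext s
  cases s with
  | inl j =>
      have hj := j.isLt
      simp only [Psi, LinearMap.coe_mk, AddHom.coe_mk, Sum.elim_inl]
      rw [Phi_coeff, dif_pos (by omega)]
      exact congrArg v (congrArg Sum.inl (Fin.ext (by simp; omega)))
  | inr j =>
      have hj := j.isLt
      simp only [Psi, LinearMap.coe_mk, AddHom.coe_mk, Sum.elim_inr]
      rw [Phi_coeff, dif_neg (by omega), dif_pos (by omega)]
      exact congrArg v (congrArg Sum.inr (Fin.ext (by simp; omega)))

lemma Phi_mem (n : ℕ) (v : Fin n ⊕ Fin n → ℂ) : Phi n v ∈ degreeLT ℂ (2*n) := by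
  rw [mem_degreeLT]
  rw [Polynomial.degree_lt_iff_coeff_zero]
  intro e he
  have he' : 2*n ≤ e := by exact_mod_cast he
  rw [Phi_coeff, dif_neg (by omega), dif_neg (by omega)]

lemma Phi_Psi (n : ℕ) (P : ℂ[X]) (hP : P ∈ degreeLT ℂ (2*n)) : Phi n (Psi n P) = P := by
  ext e
  rw [Phi_coeff]
  by_cases h : n ≤ e ∧ e < 2*n
  · rw [dif_pos h]
    simp only [Psi, LinearMap.coe_mk, AddHom.coe_mk, Sum.elim_inl]
    congr 1; omega
  · rw [dif_neg h]
    by_cases h2 : e < n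
    · rw [dif_pos h2]
      simp only [Psi, LinearMap.coe_mk, AddHom.coe_mk, Sum.elim_inr]
      congr 1; omega
    · rw [dif_neg h2]
      rw [mem_degreeLT] at hP
      exact (coeff_eq_zero_of_degree_lt (lt_of_lt_of_le hP (by exact_mod_cast (by omega : 2*n ≤ e)))).symm

noncomputable def Wm (n : ℕ) (f g : ℂ[X]) : ℂ[X] →ₗ[ℂ] (Fin n ⊕ Fin n → ℂ) where
  toFun P := Sum.elim (fun j => (f * P).coeff (2*n-1-(j:ℕ))) (fun j => (g * P).coeff (2*n-1-(j:ℕ)))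
  map_add' p q := by funext s; cases s <;> simp [mul_add]
  map_smul' c p := by funext s; cases s <;> simp [mul_smul_comm]


lemma RvHk (n : ℕ) (f : ℂ[X]) (j k : Fin n) :
    (Rv n * Hk n f) j k = f.coeff ((n-1-(j:ℕ)) + (k:ℕ) + 1) := by
  have hj := j.isLt
  rw [Matrix.mul_apply]
  rw [Finset.sum_eq_single (⟨n-1-(j:ℕ), by omega⟩ : Fin n)]
  · simp only [Rv, Hk, Matrix.of_apply]
    rw [if_pos (show (j:ℕ) + (n-1-(j:ℕ)) = n-1 by omega), one_mul]
  · intro b _ hb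
    simp only [Rv, Matrix.of_apply]
    rw [if_neg (fun hh => hb (Fin.ext (show (b:ℕ) = n-1-(j:ℕ) by omega))), zero_mul]
  · simp

lemma mul_Phi_coeff (n : ℕ) (p : ℂ[X]) (v : Fin n ⊕ Fin n → ℂ) (j : Fin n) :
    (p * Phi n v).coeff (2*n-1-(j:ℕ)) =
      (∑ k : Fin n, (if (j:ℕ) ≤ (k:ℕ) then p.coeff ((k:ℕ)-(j:ℕ)) else 0) * v (Sum.inl k))
      + ∑ k : Fin n, p.coeff ((n-1-(j:ℕ)) + (k:ℕ) + 1) * v (Sum.inr k) := by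
  have hj := j.isLt
  simp only [Phi, LinearMap.coe_mk, AddHom.coe_mk, mul_add, Finset.mul_sum, mul_smul_comm]
  rw [coeff_add, finset_sum_coeff, finset_sum_coeff]
  congr 1
  · refine Finset.sum_congr rfl fun k _ => ?_
    have hk := k.isLt
    rw [coeff_smul, coeff_mul_X_pow']
    by_cases hjk : (j:ℕ) ≤ (k:ℕ)
    · rw [if_pos (by omega), if_pos hjk]
      have he : 2*n-1-(j:ℕ) - (2*n-1-(k:ℕ)) = (k:ℕ)-(j:ℕ) := by omega
      rw [he, smul_eq_mul, mul_comm]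
    · rw [if_neg (by omega), if_neg hjk, smul_zero, zero_mul]
  · refine Finset.sum_congr rfl fun k _ => ?_
    have hk := k.isLt
    rw [coeff_smul, coeff_mul_X_pow', if_pos (by omega)]
    have he : 2*n-1-(j:ℕ) - (n-1-(k:ℕ)) = (n-1-(j:ℕ)) + (k:ℕ) + 1 := by omega
    rw [he, smul_eq_mul, mul_comm]

lemma toLin'_Rs (n : ℕ) (f g : ℂ[X]) :
    Matrix.toLin' (Rs n f g) = (Wm n f g).comp (Phi n) := by
  apply LinearMap.ext; intro v
  funext s
  have hL : Matrix.toLin' (Rs n f g) v s = ∑ t, Rs n f g s t * v t := by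
    rw [Matrix.toLin'_apply]; rfl
  rw [hL, Fintype.sum_sum_type]
  cases s with
  | inl j =>
      have hR : ((Wm n f g).comp (Phi n)) v (Sum.inl j) = (f * Phi n v).coeff (2*n-1-(j:ℕ)) := rfl
      rw [hR, mul_Phi_coeff]
      refine congrArg₂ (· + ·) ?_ ?_
      · exact Finset.sum_congr rfl fun k _ => rfl
      · refine Finset.sum_congr rfl fun k _ => ?_
        have hE : Rs n f g (Sum.inl j) (Sum.inr k) = (Rv n * Hk n f) j k := rfl
        rw [hE, RvHk]
  | inr j =>
      have hR : ((Wm n f g).comp (Phi n)) v (Sum.inr j) = (g * Phi n v).coeff (2*n-1-(j:ℕ)) := rfl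
      rw [hR, mul_Phi_coeff]
      refine congrArg₂ (· + ·) ?_ ?_
      · exact Finset.sum_congr rfl fun k _ => rfl
      · refine Finset.sum_congr rfl fun k _ => ?_
        have hE : Rs n f g (Sum.inr j) (Sum.inr k) = (Rv n * Hk n g) j k := rfl
        rw [hE, RvHk]



/-- degree helper -/
lemma degree_lt_of_natDegree_le {p : ℂ[X]} {k l : ℕ} (h : p.natDegree ≤ k) (hk : k < l) :
    p.degree < (l : ℕ) := by
  have h1 : p.degree ≤ (k : ℕ) := le_trans degree_le_natDegree (by exact_mod_cast h)
  exact lt_of_le_of_lt h1 (by exact_mod_cast hk)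

lemma degree_mul_lt' {p q : ℂ[X]} {a b c : ℕ} (hp : p.degree < (a : ℕ)) (hq : q.degree < (b : ℕ))
    (hc : a + b ≤ c + 1) : (p * q).degree < (c : ℕ) := by
  rcases eq_or_ne p 0 with h | h
  · simpa [h] using (by exact_mod_cast WithBot.bot_lt_coe c : (⊥ : WithBot ℕ) < (c : ℕ))
  rcases eq_or_ne q 0 with h' | h'
  · simpa [h'] using (by exact_mod_cast WithBot.bot_lt_coe c : (⊥ : WithBot ℕ) < (c : ℕ))
  have hp' : p.natDegree < a := (natDegree_lt_iff_degree_lt h).mpr hp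
  have hq' : q.natDegree < b := (natDegree_lt_iff_degree_lt h').mpr hq
  have hpq : p * q ≠ 0 := mul_ne_zero h h'
  rw [← natDegree_lt_iff_degree_lt hpq, natDegree_mul h h']
  omega

lemma coeff_mul_zero' {p q : ℂ[X]} {a b r : ℕ} (hp : p.degree < (a : ℕ)) (hq : q.degree < (b : ℕ))
    (hr : a + b ≤ r + 1) : (p * q).coeff r = 0 :=
  coeff_eq_zero_of_degree_lt (degree_mul_lt' hp hq hr)

lemma smul_modByMonic' (c : ℂ) (p q : ℂ[X]) (hq : q.Monic) :
    (c • p) /ₘ q = c • (p /ₘ q) ∧ (c • p) %ₘ q = c • (p %ₘ q) :=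
  div_modByMonic_unique _ _ hq
    ⟨by rw [mul_smul_comm, ← smul_add, modByMonic_add_div p q],
     (degree_smul_le c _).trans_lt (degree_modByMonic_lt p hq)⟩

lemma add_divByMonic' (p₁ p₂ q : ℂ[X]) (hq : q.Monic) :
    (p₁ + p₂) /ₘ q = p₁ /ₘ q + p₂ /ₘ q :=
  (div_modByMonic_unique _ (p₁ %ₘ q + p₂ %ₘ q) hq
    ⟨by have h1 := modByMonic_add_div p₁ q; have h2 := modByMonic_add_div p₂ q
        linear_combination h1 + h2,
     lt_of_le_of_lt (degree_add_le _ _)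
       (max_lt (degree_modByMonic_lt p₁ hq) (degree_modByMonic_lt p₂ hq))⟩).1


lemma key (n : ℕ) (f g h f₁ g₁ P : ℂ[X]) (hg0 : g ≠ 0) (hh0 : h ≠ 0)
    (hf : f = h * f₁) (hg : g = h * g₁) (hcop : IsCoprime f₁ g₁)
    (hgn : g.natDegree ≤ n) (hfgd : f.natDegree ≤ g.natDegree)
    (hP : P.degree < ((2*n : ℕ) : WithBot ℕ))
    (hwf : ∀ r : ℕ, n ≤ r → r < 2*n → (f*P).coeff r = 0)
    (hwg : ∀ r : ℕ, n ≤ r → r < 2*n → (g*P).coeff r = 0) :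
    ∀ r : ℕ, n - g.natDegree + h.natDegree ≤ r → r < 2*n → (h*P).coeff r = 0 := by
  classical
  set m := g.natDegree with hm
  set d := h.natDegree with hd
  have hg₁0 : g₁ ≠ 0 := fun hz => hg0 (by rw [hg, hz, mul_zero])
  have hdm : d ≤ m := natDegree_le_of_dvd ⟨g₁, hg⟩ hg0
  have hg₁d : g₁.natDegree = m - d := by
    have h2 := natDegree_mul hh0 hg₁0
    rw [← hg] at h2; omega
  have hf₁d : f₁.natDegree ≤ m - d := by
    rcases eq_or_ne f₁ 0 with h0 | h0
    · simp [h0]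
    · have h2 := natDegree_mul hh0 h0
      rw [← hf] at h2; omega
  have mono2n : ((X : ℂ[X]) ^ (2*n)).Monic := monic_X_pow _
  set Lf := (f*P) %ₘ (X ^ (2*n)) with hLfdef
  set Hf := (f*P) /ₘ (X ^ (2*n)) with hHfdef
  set Lg := (g*P) %ₘ (X ^ (2*n)) with hLgdef
  set Hg := (g*P) /ₘ (X ^ (2*n)) with hHgdef
  have hfe : f * P = Lf + X ^ (2*n) * Hf := (modByMonic_add_div _ _).symm
  have hge : g * P = Lg + X ^ (2*n) * Hg := (modByMonic_add_div _ _).symm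
  have hXdeg : ((X : ℂ[X]) ^ (2*n)).degree = ((2*n : ℕ) : WithBot ℕ) := degree_X_pow _
  have hlow : ∀ (p L H : ℂ[X]), p = L + X ^ (2*n) * H → L.degree < ((2*n:ℕ) : WithBot ℕ) →
      (∀ r : ℕ, n ≤ r → r < 2*n → p.coeff r = 0) → L.degree < ((n:ℕ) : WithBot ℕ) := by
    intro p L H hpe hLdeg hw
    rw [Polynomial.degree_lt_iff_coeff_zero]
    intro r hr
    have hr' : n ≤ r := by exact_mod_cast hr
    by_cases h2 : r < 2*n
    · have h3 := hw r hr' h2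
      have h4 : (X ^ (2*n) * H).coeff r = 0 := by
        rw [mul_comm, coeff_mul_X_pow', if_neg (by omega)]
      have h5 : p.coeff r = L.coeff r + (X^(2*n)*H).coeff r := by rw [hpe, coeff_add]
      rw [h3, h4, add_zero] at h5
      exact h5.symm
    · exact coeff_eq_zero_of_degree_lt (lt_of_lt_of_le hLdeg
        (by exact_mod_cast (by omega : 2*n ≤ r)))
  have hLfn : Lf.degree < ((n:ℕ) : WithBot ℕ) :=
    hlow _ _ _ hfe ((degree_modByMonic_lt _ mono2n).trans_le hXdeg.le) hwf
  have hLgn : Lg.degree < ((n:ℕ) : WithBot ℕ) :=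
    hlow _ _ _ hge ((degree_modByMonic_lt _ mono2n).trans_le hXdeg.le) hwg
  have hid : g₁ * Lf - f₁ * Lg = X^(2*n) * (f₁ * Hg - g₁ * Hf) := by
    linear_combination (-g₁) * hfe + f₁ * hge + (g₁ * P) * hf - (f₁ * P) * hg
  have hD : f₁ * Hg - g₁ * Hf = 0 := by
    by_contra hne
    have hL1 : (g₁ * Lf).degree < ((2*n:ℕ) : WithBot ℕ) :=
      degree_mul_lt' (degree_lt_of_natDegree_le hg₁d.le (Nat.lt_succ_self _)) hLfn (by omega)
    have hL2 : (f₁ * Lg).degree < ((2*n:ℕ) : WithBot ℕ) :=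
      degree_mul_lt' (degree_lt_of_natDegree_le hf₁d (Nat.lt_succ_self _)) hLgn (by omega)
    have hlhs : (g₁ * Lf - f₁ * Lg).degree < ((2*n:ℕ) : WithBot ℕ) :=
      lt_of_le_of_lt (degree_sub_le _ _) (max_lt hL1 hL2)
    have hXD : ((2*n:ℕ) : WithBot ℕ) ≤ (X^(2*n) * (f₁ * Hg - g₁ * Hf)).degree := by
      rw [degree_mul, hXdeg, degree_eq_natDegree hne, ← Nat.cast_add]
      exact_mod_cast Nat.le_add_right (2*n) _
    rw [hid] at hlhs
    exact absurd hlhs (not_lt.mpr hXD)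
  have e2 : f₁ * Lg = g₁ * Lf := by
    have h2 := hid; rw [hD, mul_zero, sub_eq_zero] at h2; exact h2.symm
  have e3 : f₁ * Hg = g₁ * Hf := sub_eq_zero.mp hD
  have hdLg : g₁ ∣ Lg := (hcop.symm).dvd_of_dvd_mul_left ⟨Lf, e2⟩
  have hdHg : g₁ ∣ Hg := (hcop.symm).dvd_of_dvd_mul_left ⟨Hf, e3⟩
  obtain ⟨S, hS⟩ := hdLg
  obtain ⟨U, hU⟩ := hdHg
  have hPeq : h * P = S + X^(2*n) * U := by
    apply mul_left_cancel₀ hg₁0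
    linear_combination hge + hS + X^(2*n) * hU - P * hg
  have hSdeg : S.degree < ((n - m + d : ℕ) : WithBot ℕ) := by
    rcases eq_or_ne S 0 with h0 | h0
    · rw [h0, degree_zero]; exact_mod_cast WithBot.bot_lt_coe _
    · have hLg0 : Lg ≠ 0 := by rw [hS]; exact mul_ne_zero hg₁0 h0
      have h1 : Lg.natDegree < n := (natDegree_lt_iff_degree_lt hLg0).mpr hLgn
      have h2 : Lg.natDegree = g₁.natDegree + S.natDegree := by
        rw [hS, natDegree_mul hg₁0 h0]
      rw [← natDegree_lt_iff_degree_lt h0]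
      omega
  intro r hr1 hr2
  rw [hPeq, coeff_add,
    coeff_eq_zero_of_degree_lt (lt_of_lt_of_le hSdeg (by exact_mod_cast hr1)),
    mul_comm ((X:ℂ[X])^(2*n)) U, coeff_mul_X_pow', if_neg (by omega), add_zero]




variable {n w : ℕ}

lemma low_deg (n w : ℕ) (p : ℂ[X]) (hw : ∀ r : ℕ, w ≤ r → r < 2*n → p.coeff r = 0) :
    (p %ₘ ((X : ℂ[X])^(2*n))).degree < ((w:ℕ) : WithBot ℕ) := by
  have mono2n : ((X : ℂ[X]) ^ (2*n)).Monic := monic_X_pow _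
  have hpe : p = p %ₘ (X^(2*n)) + X^(2*n) * (p /ₘ (X^(2*n))) := (modByMonic_add_div _ _).symm
  rw [Polynomial.degree_lt_iff_coeff_zero]
  intro r hr
  have hr' : w ≤ r := by exact_mod_cast hr
  by_cases h2 : r < 2*n
  · have h3 := hw r hr' h2
    have h4 : ((X:ℂ[X])^(2*n) * (p /ₘ (X^(2*n)))).coeff r = 0 := by
      rw [mul_comm, coeff_mul_X_pow', if_neg (by omega)]
    have h5 : p.coeff r = (p %ₘ (X^(2*n))).coeff r + (X^(2*n) * (p /ₘ (X^(2*n)))).coeff r := by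
      rw [← coeff_add, ← hpe]
    rw [h3, h4, add_zero] at h5
    exact h5.symm
  · refine coeff_eq_zero_of_degree_lt (lt_of_lt_of_le
      ((degree_modByMonic_lt _ mono2n).trans_le (degree_X_pow _).le) ?_)
    exact_mod_cast (by omega : 2*n ≤ r)

lemma window_easy (n w : ℕ) (h f₁ Q : ℂ[X]) (hfw : f₁.natDegree + w ≤ n)
    (hhQ : ∀ r : ℕ, w ≤ r → r < 2*n → (h*Q).coeff r = 0) :
    ∀ r : ℕ, n ≤ r → r < 2*n → (h * f₁ * Q).coeff r = 0 := by
  intro r hr1 hr2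
  have mono2n : ((X : ℂ[X]) ^ (2*n)).Monic := monic_X_pow _
  set A := (h*Q) %ₘ ((X:ℂ[X])^(2*n)) with hA
  set B := (h*Q) /ₘ ((X:ℂ[X])^(2*n)) with hB
  have hAB : h * Q = A + X^(2*n) * B := (modByMonic_add_div _ _).symm
  have hAdeg : A.degree < ((w:ℕ) : WithBot ℕ) := low_deg n w (h*Q) hhQ
  have hre : h * f₁ * Q = f₁ * A + X^(2*n) * (f₁ * B) := by linear_combination f₁ * hAB
  rw [hre, coeff_add]
  have hfst : (f₁ * A).coeff r = 0 := by
    apply coeff_eq_zero_of_degree_lt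
    refine lt_of_lt_of_le (degree_mul_lt' (c := f₁.natDegree + w)
      (degree_lt_of_natDegree_le (le_refl f₁.natDegree) (Nat.lt_succ_self _)) hAdeg
      (by omega)) ?_
    exact_mod_cast (by omega : f₁.natDegree + w ≤ r)
  rw [hfst, mul_comm ((X:ℂ[X])^(2*n)), coeff_mul_X_pow', if_neg (by omega), add_zero]


end ResAux

open ResAux

/-- For `n ≥ m = max(deg f, deg g)`, the nullity of the `2n × 2n` resultant matrix of
`f` and `g` equals `n - m + deg gcd(f, g)`. -/
theorem resultant_nullity_general (f g : ℂ[X]) (hfg : f ≠ 0 ∨ g ≠ 0)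
    (m : ℕ) (hm : m = max f.natDegree g.natDegree) (n : ℕ) (hn : m ≤ n) :
    Module.finrank ℂ (LinearMap.ker (Matrix.toLin' (Rs n f g))) =
      n - m + (EuclideanDomain.gcd f g).natDegree := by
  classical
  have hgcd0 : GCDMonoid.gcd f g ≠ 0 := by
    rw [Ne, gcd_eq_zero_iff]
    rintro ⟨h1, h2⟩
    rcases hfg with h | h <;> [exact h h1; exact h h2]
  have hEgcd0 : EuclideanDomain.gcd f g ≠ 0 := by
    rw [Ne, EuclideanDomain.gcd_eq_zero_iff]
    rintro ⟨h1, h2⟩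
    rcases hfg with h | h <;> [exact h h1; exact h h2]
  have hGE : (GCDMonoid.gcd f g).natDegree = (EuclideanDomain.gcd f g).natDegree :=
    le_antisymm
      (natDegree_le_of_dvd
        (EuclideanDomain.dvd_gcd (gcd_dvd_left f g) (gcd_dvd_right f g)) hEgcd0)
      (natDegree_le_of_dvd
        (dvd_gcd (EuclideanDomain.gcd_dvd_left f g) (EuclideanDomain.gcd_dvd_right f g)) hgcd0)
  set G := GCDMonoid.gcd f g with hG
  set h := normalize G with hhdef
  have hmono : h.Monic := monic_normalize hgcd0
  have hh0 : h ≠ 0 := hmono.ne_zero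
  set d := h.natDegree with hd
  have hdG : d = G.natDegree := natDegree_eq_of_degree_eq degree_normalize
  have hdvf : h ∣ f := normalize_dvd_iff.mpr (gcd_dvd_left f g)
  have hdvg : h ∣ g := normalize_dvd_iff.mpr (gcd_dvd_right f g)
  set f₁ := f /ₘ h with hf₁def
  set g₁ := g /ₘ h with hg₁def
  have hf1 : f = h * f₁ := by
    have h2 := modByMonic_add_div f h
    rw [(modByMonic_eq_zero_iff_dvd hmono).mpr hdvf, zero_add] at h2
    exact h2.symm
  have hg1 : g = h * g₁ := by
    have h2 := modByMonic_add_div g h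
    rw [(modByMonic_eq_zero_iff_dvd hmono).mpr hdvg, zero_add] at h2
    exact h2.symm
  have hcop : IsCoprime f₁ g₁ := by
    rcases eq_or_ne g 0 with hgz | hgz
    · have hfz : f ≠ 0 := hfg.resolve_right (not_not_intro hgz)
      have hg₁z : g₁ = 0 := by rw [hg₁def, hgz, zero_divByMonic]
      rw [hg₁z, isCoprime_zero_right]
      have hGf : G.natDegree = f.natDegree := by
        rw [hG, hgz, gcd_zero_right]
        exact natDegree_eq_of_degree_eq degree_normalize
      have hf₁0 : f₁ ≠ 0 := fun hz => hfz (by rw [hf1, hz, mul_zero])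
      rw [Polynomial.isUnit_iff_degree_eq_zero]
      have hdeg := natDegree_mul hh0 hf₁0
      rw [← hf1] at hdeg
      have hhf : h.natDegree = f.natDegree := by
        rw [← hd, hdG, hGf]
      rw [degree_eq_natDegree hf₁0]
      have : f₁.natDegree = 0 := by omega
      rw [this]; rfl
    · have hcop0 : IsCoprime (f / G) (g / G) := isCoprime_div_gcd_div_gcd hgz
      have hu : IsUnit ((normUnit G : ℂ[X]ˣ) : ℂ[X]) := Units.isUnit _
      have hGu : h = G * (normUnit G : ℂ[X]ˣ) := normalize_apply G
      have hfd : f / G = ((normUnit G : ℂ[X]ˣ) : ℂ[X]) * f₁ := by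
        apply mul_left_cancel₀ hgcd0
        rw [EuclideanDomain.mul_div_cancel' hgcd0 (gcd_dvd_left f g), ← mul_assoc,
          ← hGu, ← hf1]
      have hgd : g / G = ((normUnit G : ℂ[X]ˣ) : ℂ[X]) * g₁ := by
        apply mul_left_cancel₀ hgcd0
        rw [EuclideanDomain.mul_div_cancel' hgcd0 (gcd_dvd_right f g), ← mul_assoc,
          ← hGu, ← hg1]
      rw [hfd, hgd] at hcop0
      exact (isCoprime_mul_unit_left hu _ _).mp hcop0
  have hcase : (g ≠ 0 ∧ f.natDegree ≤ g.natDegree ∧ g.natDegree = m) ∨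
      (f ≠ 0 ∧ g.natDegree ≤ f.natDegree ∧ f.natDegree = m) := by
    rcases le_total f.natDegree g.natDegree with hle | hle
    · rcases eq_or_ne g 0 with hgz | hgz
      · right
        have hfz : f ≠ 0 := hfg.resolve_right (not_not_intro hgz)
        have hz : g.natDegree = 0 := by rw [hgz, natDegree_zero]
        exact ⟨hfz, by omega, by omega⟩
      · exact Or.inl ⟨hgz, hle, by omega⟩
    · rcases eq_or_ne f 0 with hfz | hfz
      · left
        have hgz : g ≠ 0 := hfg.resolve_left (not_not_intro hfz)
        have hz : f.natDegree = 0 := by rw [hfz, natDegree_zero]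
        exact ⟨hgz, by omega, by omega⟩
      · exact Or.inr ⟨hfz, hle, by omega⟩
  have hdm : d ≤ m := by
    rcases hcase with ⟨h1, _, h3⟩ | ⟨h1, _, h3⟩
    · rw [← h3]; exact natDegree_le_of_dvd hdvg h1
    · rw [← h3]; exact natDegree_le_of_dvd hdvf h1
  have hfm : f.natDegree ≤ m := by omega
  have hgm : g.natDegree ≤ m := by omega
  have hf₁d : f₁.natDegree ≤ m - d := by
    rcases eq_or_ne f₁ 0 with h0 | h0
    · simp [h0]
    · have h2 := natDegree_mul hh0 h0
      rw [← hf1] at h2; omega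
  have hg₁d : g₁.natDegree ≤ m - d := by
    rcases eq_or_ne g₁ 0 with h0 | h0
    · simp [h0]
    · have h2 := natDegree_mul hh0 h0
      rw [← hg1] at h2; omega
  -- the key (hard) direction
  have hkey : ∀ P : ℂ[X], P.degree < ((2*n:ℕ) : WithBot ℕ) →
      (∀ r : ℕ, n ≤ r → r < 2*n → (f*P).coeff r = 0) →
      (∀ r : ℕ, n ≤ r → r < 2*n → (g*P).coeff r = 0) →
      ∀ r : ℕ, n - m + d ≤ r → r < 2*n → (h*P).coeff r = 0 := by
    rcases hcase with ⟨h1, h2, h3⟩ | ⟨h1, h2, h3⟩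
    · intro P hPd hw1 hw2 r hr1 hr2
      exact key n f g h f₁ g₁ P h1 hh0 hf1 hg1 hcop (by omega) h2 hPd hw1 hw2 r (by omega) hr2
    · intro P hPd hw1 hw2 r hr1 hr2
      exact key n g f h g₁ f₁ P h1 hh0 hg1 hf1 hcop.symm (by omega) h2 hPd hw2 hw1 r (by omega) hr2
  -- the linear map from the parameter space
  let Theta : (degreeLT ℂ (n-m) × degreeLT ℂ d) →ₗ[ℂ] ℂ[X] :=
      { toFun := fun TU => (TU.1 : ℂ[X]) + ((X:ℂ[X])^(2*n) * (TU.2 : ℂ[X])) /ₘ h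
        map_add' := fun a b => by
          simp only [Submodule.coe_add, Prod.fst_add, Prod.snd_add, mul_add]
          rw [add_divByMonic' _ _ _ hmono]; ring
        map_smul' := fun c a => by
          simp only [Prod.smul_fst, Prod.smul_snd, SetLike.val_smul, RingHom.id_apply, smul_add,
            mul_smul_comm, (smul_modByMonic' c ((X:ℂ[X])^(2*n) * (a.2:ℂ[X])) h hmono).1] }
  set E : (degreeLT ℂ (n-m) × degreeLT ℂ d) →ₗ[ℂ] (Fin n ⊕ Fin n → ℂ) :=
    (Psi n).comp Theta with hEdef
  have hEapp : ∀ TU : degreeLT ℂ (n-m) × degreeLT ℂ d,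
      E TU = Psi n ((TU.1 : ℂ[X]) + ((X:ℂ[X])^(2*n) * (TU.2 : ℂ[X])) /ₘ h) := fun _ => rfl

  have hdiv_mem : ∀ U : ℂ[X], U ∈ degreeLT ℂ d → ((X:ℂ[X])^(2*n) * U) /ₘ h ∈ degreeLT ℂ (2*n) := by
    intro U hU
    by_cases hz : ((X:ℂ[X])^(2*n) * U) /ₘ h = 0
    · rw [hz]; exact Submodule.zero_mem _
    · have hXU : (X:ℂ[X])^(2*n) * U ≠ 0 := fun he => hz (by rw [he, zero_divByMonic])
      have hU0 : U ≠ 0 := right_ne_zero_of_mul hXU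
      have hUd : U.natDegree < d := (natDegree_lt_iff_degree_lt hU0).mpr (mem_degreeLT.mp hU)
      have hnd : ((X:ℂ[X])^(2*n) * U).natDegree = 2*n + U.natDegree := by
        rw [natDegree_mul (pow_ne_zero _ X_ne_zero) hU0, natDegree_X_pow]
      rw [mem_degreeLT, ← natDegree_lt_iff_degree_lt hz, natDegree_divByMonic _ hmono, hnd]
      omega
  have hsplitU : ∀ U : ℂ[X],
      h * (((X:ℂ[X])^(2*n) * U) /ₘ h) = X^(2*n)*U - ((X:ℂ[X])^(2*n)*U) %ₘ h := by
    intro U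
    linear_combination modByMonic_add_div ((X:ℂ[X])^(2*n)*U) h
  have hQwin : ∀ T U : ℂ[X], T ∈ degreeLT ℂ (n-m) → U ∈ degreeLT ℂ d →
      ∀ r : ℕ, n-m+d ≤ r → r < 2*n →
        (h * (T + ((X:ℂ[X])^(2*n) * U) /ₘ h)).coeff r = 0 := by
    intro T U hT hU r hr1 hr2
    rw [mul_add, hsplitU]
    have c1 : (h*T).coeff r = 0 := by
      apply coeff_eq_zero_of_degree_lt
      refine lt_of_lt_of_le (degree_mul_lt' (c := n-m+d)
        (degree_lt_of_natDegree_le (le_refl h.natDegree) (Nat.lt_succ_self _))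
        (mem_degreeLT.mp hT) (by omega)) ?_
      exact_mod_cast hr1
    have c2 : ((X:ℂ[X])^(2*n)*U).coeff r = 0 := by
      rw [mul_comm, coeff_mul_X_pow', if_neg (by omega)]
    have c3 : ((((X:ℂ[X])^(2*n))*U) %ₘ h).coeff r = 0 := by
      apply coeff_eq_zero_of_degree_lt
      refine lt_of_lt_of_le (degree_modByMonic_lt _ hmono) ?_
      rw [degree_eq_natDegree hh0]
      exact_mod_cast (by omega : h.natDegree ≤ r)
    rw [coeff_add, coeff_sub, c1, c2, c3]; ring
  have hQmem : ∀ T U : ℂ[X], T ∈ degreeLT ℂ (n-m) → U ∈ degreeLT ℂ d →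
      (T + ((X:ℂ[X])^(2*n) * U) /ₘ h) ∈ degreeLT ℂ (2*n) := by
    intro T U hT hU
    refine Submodule.add_mem _ ?_ (hdiv_mem U hU)
    rw [mem_degreeLT]
    exact lt_of_lt_of_le (mem_degreeLT.mp hT) (by exact_mod_cast (by omega : n-m ≤ 2*n))
  have hmem : ∀ TU : degreeLT ℂ (n-m) × degreeLT ℂ d,
      E TU ∈ LinearMap.ker ((Wm n f g).comp (Phi n)) := by
    rintro ⟨⟨T, hT⟩, ⟨U, hU⟩⟩
    rw [LinearMap.mem_ker, hEapp]
    rw [LinearMap.comp_apply, Phi_Psi n _ (hQmem T U hT hU)]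
    have hwinf : ∀ r : ℕ, n ≤ r → r < 2*n →
        (f * (T + ((X:ℂ[X])^(2*n) * U) /ₘ h)).coeff r = 0 := by
      intro r a b
      have h2 := window_easy n (n-m+d) h f₁ (T + ((X:ℂ[X])^(2*n) * U) /ₘ h) (by omega)
        (hQwin T U hT hU) r a b
      rw [hf1]; exact h2
    have hwing : ∀ r : ℕ, n ≤ r → r < 2*n →
        (g * (T + ((X:ℂ[X])^(2*n) * U) /ₘ h)).coeff r = 0 := by
      intro r a b
      have h2 := window_easy n (n-m+d) h g₁ (T + ((X:ℂ[X])^(2*n) * U) /ₘ h) (by omega)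
        (hQwin T U hT hU) r a b
      rw [hg1]; exact h2
    funext s
    cases s with
    | inl j =>
        have hj := j.isLt
        show (f * (T + ((X:ℂ[X])^(2*n) * U) /ₘ h)).coeff (2*n-1-(j:ℕ)) = 0
        exact hwinf _ (by omega) (by omega)
    | inr j =>
        have hj := j.isLt
        show (g * (T + ((X:ℂ[X])^(2*n) * U) /ₘ h)).coeff (2*n-1-(j:ℕ)) = 0
        exact hwing _ (by omega) (by omega)
  have hinj : Function.Injective E := by
    rw [← LinearMap.ker_eq_bot]
    rw [Submodule.eq_bot_iff]
    rintro ⟨⟨T, hT⟩, ⟨U, hU⟩⟩ hTU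
    rw [LinearMap.mem_ker, hEapp] at hTU
    have hQ0 : T + ((X:ℂ[X])^(2*n) * U) /ₘ h = 0 := by
      rw [← Phi_Psi n _ (hQmem T U hT hU), hTU, map_zero]
    have hXU : (X:ℂ[X])^(2*n)*U = ((X:ℂ[X])^(2*n)*U) %ₘ h - h*T := by
      have h2 : h * (T + ((X:ℂ[X])^(2*n) * U) /ₘ h) = 0 := by rw [hQ0, mul_zero]
      rw [mul_add, hsplitU] at h2
      linear_combination h2
    have hU0 : U = 0 := by
      by_contra hU0
      have hUd : U.natDegree < d := (natDegree_lt_iff_degree_lt hU0).mpr (mem_degreeLT.mp hU)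
      have hXUne : (X:ℂ[X])^(2*n)*U ≠ 0 := mul_ne_zero (pow_ne_zero _ X_ne_zero) hU0
      have hlhs : ((2*n:ℕ) : WithBot ℕ) ≤ ((X:ℂ[X])^(2*n)*U).degree := by
        rw [degree_eq_natDegree hXUne, natDegree_mul (pow_ne_zero _ X_ne_zero) hU0,
          natDegree_X_pow]
        exact_mod_cast Nat.le_add_right (2*n) _
      have hrdeg : (((X:ℂ[X])^(2*n)*U) %ₘ h - h*T).degree < ((2*n:ℕ) : WithBot ℕ) := by
        refine lt_of_le_of_lt (degree_sub_le _ _) (max_lt ?_ ?_)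
        · refine lt_of_lt_of_le (degree_modByMonic_lt _ hmono) ?_
          rw [degree_eq_natDegree hh0]
          exact_mod_cast (by omega : h.natDegree ≤ 2*n)
        · refine lt_of_lt_of_le (degree_mul_lt' (c := n-m+d)
            (degree_lt_of_natDegree_le (le_refl h.natDegree) (Nat.lt_succ_self _))
            (mem_degreeLT.mp hT) (by omega)) ?_
          exact_mod_cast (by omega : n-m+d ≤ 2*n)
      rw [← hXU] at hrdeg
      exact absurd hrdeg (not_lt.mpr hlhs)
    have hT0 : T = 0 := by
      have h3 : h * T = 0 := by
        have h4 := hXU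
        rw [hU0, mul_zero, zero_modByMonic, zero_sub] at h4
        linear_combination h4
      exact (mul_eq_zero.mp h3).resolve_left hh0
    exact Prod.ext_iff.mpr ⟨Subtype.ext hT0, Subtype.ext hU0⟩
  have hsurj : ∀ v, v ∈ LinearMap.ker ((Wm n f g).comp (Phi n)) → ∃ TU, E TU = v := by
    intro v hv
    rw [LinearMap.mem_ker] at hv
    have hPmem : Phi n v ∈ degreeLT ℂ (2*n) := Phi_mem n v
    have hw1 : ∀ r : ℕ, n ≤ r → r < 2*n → (f * Phi n v).coeff r = 0 := by
      intro r a b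
      have hj : 2*n-1-r < n := by omega
      have h2 := congrFun hv (Sum.inl ⟨2*n-1-r, hj⟩)
      have h3 : ((Wm n f g).comp (Phi n)) v (Sum.inl ⟨2*n-1-r, hj⟩)
          = (f * Phi n v).coeff (2*n-1-(2*n-1-r)) := rfl
      rw [h3, (by omega : 2*n-1-(2*n-1-r) = r)] at h2
      simpa using h2
    have hw2 : ∀ r : ℕ, n ≤ r → r < 2*n → (g * Phi n v).coeff r = 0 := by
      intro r a b
      have hj : 2*n-1-r < n := by omega
      have h2 := congrFun hv (Sum.inr ⟨2*n-1-r, hj⟩)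
      have h3 : ((Wm n f g).comp (Phi n)) v (Sum.inr ⟨2*n-1-r, hj⟩)
          = (g * Phi n v).coeff (2*n-1-(2*n-1-r)) := rfl
      rw [h3, (by omega : 2*n-1-(2*n-1-r) = r)] at h2
      simpa using h2
    have hwin := hkey (Phi n v) (mem_degreeLT.mp hPmem) hw1 hw2
    have mono2n : ((X:ℂ[X])^(2*n)).Monic := monic_X_pow _
    set P := Phi n v with hPdef
    set U := (h*P) /ₘ ((X:ℂ[X])^(2*n)) with hUdef
    set S := (h*P) %ₘ ((X:ℂ[X])^(2*n)) with hSdef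
    set T := S /ₘ h with hTdef
    have hsplit2 : h*P = S + X^(2*n)*U := (modByMonic_add_div _ _).symm
    have hSdeg : S.degree < ((n-m+d : ℕ) : WithBot ℕ) := low_deg n (n-m+d) (h*P) hwin
    have hTmem : T ∈ degreeLT ℂ (n-m) := by
      by_cases hz : T = 0
      · rw [hz]; exact Submodule.zero_mem _
      · have hSz : S ≠ 0 := fun he => hz (by rw [hTdef, he, zero_divByMonic])
        have h5 : ¬ S.degree < h.degree := fun hlt => hz ((divByMonic_eq_zero_iff hmono).mpr hlt)
        have h6 : d ≤ S.natDegree := by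
          rw [degree_eq_natDegree hSz, degree_eq_natDegree hh0] at h5
          exact_mod_cast not_lt.mp h5
        have h7 : S.natDegree < n-m+d := (natDegree_lt_iff_degree_lt hSz).mpr hSdeg
        rw [mem_degreeLT, ← natDegree_lt_iff_degree_lt hz, hTdef, natDegree_divByMonic _ hmono]
        omega
    have hUmem : U ∈ degreeLT ℂ d := by
      by_cases hz : U = 0
      · rw [hz]; exact Submodule.zero_mem _
      · have hhP : h*P ≠ 0 := fun he => hz (by rw [hUdef, he, zero_divByMonic])
        have hPz : P ≠ 0 := fun he => hhP (by rw [he, mul_zero])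
        have h5 : ¬ (h*P).degree < ((X:ℂ[X])^(2*n)).degree := fun hlt =>
          hz ((divByMonic_eq_zero_iff mono2n).mpr hlt)
        have h6 : 2*n ≤ (h*P).natDegree := by
          rw [degree_eq_natDegree hhP, degree_X_pow] at h5
          exact_mod_cast not_lt.mp h5
        have h8 : P.natDegree < 2*n := (natDegree_lt_iff_degree_lt hPz).mpr (mem_degreeLT.mp hPmem)
        have h7 : (h*P).natDegree ≤ h.natDegree + (2*n - 1) := by
          refine le_trans natDegree_mul_le ?_
          omega
        rw [mem_degreeLT, ← natDegree_lt_iff_degree_lt hz, hUdef, natDegree_divByMonic _ mono2n,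
          natDegree_X_pow]
        omega
    refine ⟨(⟨T, hTmem⟩, ⟨U, hUmem⟩), ?_⟩
    rw [hEapp]
    have hXU2 : (X:ℂ[X])^(2*n)*U = h*P - S := by linear_combination -hsplit2
    have hQeq : T + ((X:ℂ[X])^(2*n) * U) /ₘ h = P := by
      rw [hXU2, sub_eq_add_neg, add_divByMonic' _ _ _ hmono]
      have hneg : (-S) /ₘ h = -(S /ₘ h) := by
        have h9 := (smul_modByMonic' (-1 : ℂ) S h hmono).1
        simpa using h9
      rw [hneg, mul_divByMonic_cancel_left P hmono, hTdef]
      ring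
    have hQeq2 : ((((⟨T, hTmem⟩ : degreeLT ℂ (n-m)), (⟨U, hUmem⟩ : degreeLT ℂ d)).1 : ℂ[X])
        + ((X:ℂ[X])^(2*n) * (((⟨T, hTmem⟩ : degreeLT ℂ (n-m)), (⟨U, hUmem⟩ : degreeLT ℂ d)).2 : ℂ[X])) /ₘ h) = P := hQeq
    rw [hQeq2, hPdef]
    exact Psi_Phi n v
  have hbij : Function.Bijective
      (E.codRestrict (LinearMap.ker ((Wm n f g).comp (Phi n))) hmem) := by
    constructor
    · intro a b hab
      exact hinj (congrArg Subtype.val hab)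
    · rintro ⟨v, hv⟩
      obtain ⟨TU, hTU⟩ := hsurj v hv
      exact ⟨TU, Subtype.ext hTU⟩
  haveI : Module.Finite ℂ (degreeLT ℂ (n-m)) := Module.Finite.equiv (degreeLTEquiv ℂ (n-m)).symm
  haveI : Module.Finite ℂ (degreeLT ℂ d) := Module.Finite.equiv (degreeLTEquiv ℂ d).symm
  have hfr : Module.finrank ℂ (LinearMap.ker ((Wm n f g).comp (Phi n))) = (n-m) + d := by
    rw [← (LinearEquiv.ofBijective _ hbij).finrank_eq, Module.finrank_prod]
    have e1 : Module.finrank ℂ (degreeLT ℂ (n-m)) = n-m := by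
      rw [(degreeLTEquiv ℂ (n-m)).finrank_eq, Module.finrank_pi, Fintype.card_fin]
    have e2 : Module.finrank ℂ (degreeLT ℂ d) = d := by
      rw [(degreeLTEquiv ℂ d).finrank_eq, Module.finrank_pi, Fintype.card_fin]
    rw [e1, e2]
  rw [toLin'_Rs, hfr, hdG, hGE]
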